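/- Let R > 0, 0 < 2M < R, χ = 2M/R, and let δ ≥ 0 be a real number. Let m : [0,R] → ℝ be continuous with m(R) = M and 0 ≤ 2m(r) < r for all r ∈ (0,R], and let ζ : [0,R] → ℝ be continuous on [0,R], differentiable on (0,R), with ζ(R) = √(1−χ). Suppose that for every r ∈ (0,R) one has m(r) ≥ M r³/R³ and r^{−(1+2δ)}·√(1−2m(r)/r)·ζ′(r) ≥ M/R^{3+2δ}. Then ζ(0) ≤ √(1−χ) − (χ/(2R^{2+2δ}))·∫₀^R r^{1+2δ}/√(1−χ r²/R²) dr. -/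

import Mathlib

open Real Set

theorem anisotropic_zeta_center_bound
    (R M χ δ : ℝ) (hR : 0 < R) (hM : 0 < 2 * M) (hMR : 2 * M < R)
    (hχ : χ = 2 * M / R) (hδ : 0 ≤ δ)
    (m ζ ζ' : ℝ → ℝ)
    (hm_cont : ContinuousOn m (Icc 0 R))
    (hmR : m R = M)
    (hm_bound : ∀ r ∈ Ioc (0:ℝ) R, 0 ≤ 2 * m r ∧ 2 * m r < r)
    (hζ_cont : ContinuousOn ζ (Icc 0 R))
    (hζ_deriv : ∀ r ∈ Ioo (0:ℝ) R, HasDerivAt ζ (ζ' r) r)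
    (hζR : ζ R = Real.sqrt (1 - χ))
    (hm_ge : ∀ r ∈ Ioo (0:ℝ) R, m r ≥ M * r ^ 3 / R ^ 3)
    (hineq : ∀ r ∈ Ioo (0:ℝ) R,
      r ^ (-(1 + 2 * δ)) * Real.sqrt (1 - 2 * m r / r) * ζ' r ≥ M / R ^ ((3:ℝ) + 2 * δ)) :
    ζ 0 ≤ Real.sqrt (1 - χ) -
      (χ / (2 * R ^ ((2:ℝ) + 2 * δ))) *
        ∫ r in (0:ℝ)..R, r ^ ((1:ℝ) + 2 * δ) / Real.sqrt (1 - χ * r ^ 2 / R ^ 2) := by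
  have hMpos : 0 < M := by linarith
  have hχpos : 0 < χ := by rw [hχ]; positivity
  have hχlt : χ < 1 := by rw [hχ, div_lt_one hR]; linarith
  set p : ℝ := (1:ℝ) + 2 * δ with hp
  have hppos : 0 < p := by rw [hp]; linarith
  set C : ℝ := M / R ^ ((3:ℝ) + 2 * δ) with hC
  have hCpos : 0 < C := div_pos hMpos (Real.rpow_pos_of_pos hR _)
  set g : ℝ → ℝ := fun r => C * (r ^ p / Real.sqrt (1 - χ * r ^ 2 / R ^ 2)) with hgdef
  -- the denominator is positive on [0, R]
  have hden : ∀ r ∈ Icc (0:ℝ) R, 0 < 1 - χ * r ^ 2 / R ^ 2 := by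
    intro r hr
    have h1 : χ * r ^ 2 / R ^ 2 ≤ χ := by
      rw [div_le_iff₀ (by positivity)]
      have hr2 : r ^ 2 ≤ R ^ 2 := by nlinarith [hr.1, hr.2]
      nlinarith [mul_le_mul_of_nonneg_left hr2 hχpos.le]
    linarith
  -- continuity of g at points of [0, R]
  have hgca : ∀ r ∈ Icc (0:ℝ) R, ContinuousAt g r := by
    intro r hr
    have h1 : ContinuousAt (fun r : ℝ => r ^ p) r :=
      Real.continuousAt_rpow_const r p (Or.inr hppos.le)
    have h2 : ContinuousAt (fun r : ℝ => Real.sqrt (1 - χ * r ^ 2 / R ^ 2)) r :=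
      (Real.continuous_sqrt.comp (by fun_prop :
        Continuous fun r : ℝ => 1 - χ * r ^ 2 / R ^ 2)).continuousAt
    have h3 : Real.sqrt (1 - χ * r ^ 2 / R ^ 2) ≠ 0 :=
      ne_of_gt (Real.sqrt_pos.mpr (hden r hr))
    exact continuousAt_const.mul (h1.div h2 h3)
  have hgc : ContinuousOn g (Icc 0 R) := fun r hr => (hgca r hr).continuousWithinAt
  have hgint : ∀ r ∈ Icc (0:ℝ) R, IntervalIntegrable g MeasureTheory.volume 0 r := by
    intro r hr
    apply ContinuousOn.intervalIntegrable
    rw [uIcc_of_le hr.1]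
    exact hgc.mono (Icc_subset_Icc_right hr.2)
  set F : ℝ → ℝ := fun r => ∫ t in (0:ℝ)..r, g t with hFdef
  have hFc : ContinuousOn F (Icc 0 R) := by
    have h := intervalIntegral.continuousOn_primitive_interval
      (f := g) (μ := MeasureTheory.volume) (a := (0:ℝ)) (b := R)
      (by rw [uIcc_of_le hR.le]; exact hgc.integrableOn_compact isCompact_Icc)
    rwa [uIcc_of_le hR.le] at h
  have hF' : ∀ r ∈ Ioo (0:ℝ) R, HasDerivAt F (g r) r := by
    intro r hr
    exact intervalIntegral.integral_hasDerivAt_right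
      (hgint r ⟨hr.1.le, hr.2.le⟩)
      (ContinuousOn.stronglyMeasurableAtFilter isOpen_Ioo
        (hgc.mono Ioo_subset_Icc_self) r hr)
      (hgca r ⟨hr.1.le, hr.2.le⟩)
  -- the key pointwise inequality ζ' ≥ g on (0, R)
  have hzg : ∀ r ∈ Ioo (0:ℝ) R, g r ≤ ζ' r := by
    intro r hr
    obtain ⟨hr0, hrR⟩ := hr
    have hrp : 0 < r ^ p := Real.rpow_pos_of_pos hr0 p
    have hm2 := hm_bound r ⟨hr0, hrR.le⟩
    have hs_pos : 0 < 1 - 2 * m r / r := by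
      rw [sub_pos, div_lt_one hr0]; exact hm2.2
    have hs : 0 < Real.sqrt (1 - 2 * m r / r) := Real.sqrt_pos.mpr hs_pos
    have hkey := hineq r ⟨hr0, hrR⟩
    rw [show -(1 + 2 * δ) = -p by rw [hp], Real.rpow_neg hr0.le] at hkey
    have h1 : C * r ^ p / Real.sqrt (1 - 2 * m r / r) ≤ ζ' r := by
      rw [div_le_iff₀ hs]
      have h2 : C * r ^ p ≤ ((r ^ p)⁻¹ * Real.sqrt (1 - 2 * m r / r) * ζ' r) * r ^ p := by
        have := mul_le_mul_of_nonneg_right hkey hrp.le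
        linarith [this]
      calc C * r ^ p ≤ ((r ^ p)⁻¹ * Real.sqrt (1 - 2 * m r / r) * ζ' r) * r ^ p := h2
        _ = ζ' r * Real.sqrt (1 - 2 * m r / r) := by
            field_simp
    -- compare the square roots
    have hM3 : M * r ^ 3 ≤ m r * R ^ 3 := by
      have hmge := hm_ge r ⟨hr0, hrR⟩
      rw [ge_iff_le, div_le_iff₀ (by positivity)] at hmge
      linarith
    have hcomp0 : χ * r ^ 2 / R ^ 2 ≤ 2 * m r / r := by
      rw [hχ, div_le_div_iff₀ (by positivity) hr0, div_mul_eq_mul_div,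
        div_mul_eq_mul_div, div_le_iff₀ hR]
      nlinarith [hM3]
    have hcomp : 1 - 2 * m r / r ≤ 1 - χ * r ^ 2 / R ^ 2 := by linarith
    have h5 : C * r ^ p / Real.sqrt (1 - χ * r ^ 2 / R ^ 2)
        ≤ C * r ^ p / Real.sqrt (1 - 2 * m r / r) := by
      exact div_le_div_of_nonneg_left (mul_pos hCpos hrp).le hs
        (Real.sqrt_le_sqrt hcomp)
    calc g r = C * r ^ p / Real.sqrt (1 - χ * r ^ 2 / R ^ 2) := by
          rw [hgdef]; ring
      _ ≤ C * r ^ p / Real.sqrt (1 - 2 * m r / r) := h5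
      _ ≤ ζ' r := h1
  -- monotonicity of ζ - F
  have hmono : MonotoneOn (fun r => ζ r - F r) (Icc 0 R) := by
    apply monotoneOn_of_deriv_nonneg (convex_Icc 0 R) (hζ_cont.sub hFc)
    · intro x hx
      rw [interior_Icc] at hx
      exact ((hζ_deriv x hx).sub (hF' x hx)).differentiableAt.differentiableWithinAt
    · intro x hx
      rw [interior_Icc] at hx
      rw [((hζ_deriv x hx).sub (hF' x hx)).deriv]
      linarith [hzg x hx]
  have h0R := hmono (left_mem_Icc.mpr hR.le) (right_mem_Icc.mpr hR.le) hR.le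
  have hF0 : F 0 = 0 := intervalIntegral.integral_same
  have hFR : F R = C * ∫ r in (0:ℝ)..R, r ^ p / Real.sqrt (1 - χ * r ^ 2 / R ^ 2) := by
    rw [hFdef]
    exact intervalIntegral.integral_const_mul _ _
  have hRp : (0:ℝ) < R ^ ((2:ℝ) + 2 * δ) := Real.rpow_pos_of_pos hR _
  have h3 : R ^ ((3:ℝ) + 2 * δ) = R * R ^ ((2:ℝ) + 2 * δ) := by
    rw [show (3:ℝ) + 2 * δ = 1 + ((2:ℝ) + 2 * δ) by ring, Real.rpow_add hR, Real.rpow_one]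
  have hCeq : χ / (2 * R ^ ((2:ℝ) + 2 * δ)) = C := by
    rw [hχ, hC, h3]
    field_simp
  rw [hCeq, ← hζR]
  simp only [hF0, sub_zero] at h0R
  linarith [h0R, hFR.symm.le, hFR.le]
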